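/- Let v : ℝ → ℝ̄ be an upper semicontinuous function such that J[|v|] < +∞, i.e., x ↦ v(x)/(π(1+x²)) is Lebesgue summable on ℝ. Then the function on ℂ defined as the Poisson integral (𝒫v)(z) := (1/π)∫_{−∞}^{+∞} |Im z| v(x) / ((Im z)² + (Re z − x)²) dx for z ∈ ℂ \ ℝ and as v(z) for z ∈ ℝ is upper semicontinuous on ℂ; moreover, if v is continuous on ℝ, this function is continuous on ℂ. -/

import Mathlib

open MeasureTheory Filter Metric Complex ENNReal

noncomputable section

/-- A function `u : ℂ → ℝ` is subharmonic if it is upper semicontinuous and satisfies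
the sub-mean value inequality on every circle. -/
def Subharmonic (u : ℂ → ℝ) : Prop :=
  UpperSemicontinuous u ∧
    ∀ z : ℂ, ∀ ρ : ℝ, 0 < ρ →
      u z ≤ (2 * Real.pi)⁻¹ *
        ∫ θ in (0 : ℝ)..(2 * Real.pi), u (z + (ρ : ℂ) * Complex.exp ((θ : ℂ) * Complex.I))

/-- The (upper) type at order 1 of `u : ℂ → ℝ`:  `limsup_{z → ∞} u⁺(z)/|z|`, as an
extended real number. -/
def typeOf (u : ℂ → ℝ) : EReal :=
  Filter.limsup (fun z : ℂ => ((max (u z) 0 / ‖z‖ : ℝ) : EReal))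
    (Filter.cocompact ℂ)

/-- `u` is a subharmonic function of Cartwright class: subharmonic on `ℂ`, of finite type
at order `1`, and with finite logarithmic integral `J[u⁺] < +∞`. -/
def CartwrightClass (u : ℂ → ℝ) : Prop :=
  Subharmonic u ∧ typeOf u < ⊤ ∧
    Integrable (fun x : ℝ => max (u (x : ℂ)) 0 / (1 + x ^ 2))

/-- The exponential type of an entire function: `limsup_{z→∞} ln⁺|h(z)|/|z|`. -/
def entireType (h : ℂ → ℂ) : EReal :=
  typeOf fun z => Real.log (‖h z‖)

/-- The Poisson integral over `ℂ \ ℝ` of a density `v` on `ℝ`. -/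
def poissonIntegral (v : ℝ → ℝ) (z : ℂ) : ℝ :=
  Real.pi⁻¹ * ∫ x : ℝ, |z.im| * v x / (z.im ^ 2 + (z.re - x) ^ 2)

/-- `u` is harmonic on an (open) set `S`: continuous on `S` and satisfying the mean value
equality on all sufficiently small circles around each point of `S`. -/
def HarmonicOn (u : ℂ → ℝ) (S : Set ℂ) : Prop :=
  ContinuousOn u S ∧
    ∀ z ∈ S, ∃ r > (0 : ℝ), Metric.ball z r ⊆ S ∧
      ∀ ρ : ℝ, 0 < ρ → ρ < r →
        u z = (2 * Real.pi)⁻¹ *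
          ∫ θ in (0 : ℝ)..(2 * Real.pi), u (z + (ρ : ℂ) * Complex.exp ((θ : ℂ) * Complex.I))

/-- The `d`-dimensional Hausdorff content with variable covering radius `r`. -/
def hausdorffContentVR (d : ℝ) (r : ℂ → ℝ) (S : Set ℂ) : ℝ≥0∞ :=
  ⨅ (c : ℕ → ℂ) (ρ : ℕ → ℝ) (_ : ∀ k, 0 ≤ ρ k ∧ ρ k ≤ r (c k))
      (_ : S ⊆ ⋃ k, Metric.closedBall (c k) (ρ k)),
    ∑' k, ENNReal.ofReal (Real.pi ^ (d / 2) / Real.Gamma (1 + d / 2) * ρ k ^ d)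

/-! ### Auxiliary lemmas -/

lemma poisson_kernel_integral (a b : ℝ) (hb : b ≠ 0) :
    ∫ x : ℝ, |b| / (b ^ 2 + (a - x) ^ 2) = Real.pi := by
  have h1 : (fun x : ℝ => |b| / (b ^ 2 + (a - x) ^ 2))
      = fun x : ℝ => (fun t : ℝ => |b| / (b ^ 2 + t ^ 2)) (x - a) := by
    funext x; simp only; ring_nf
  rw [h1, integral_sub_right_eq_self (fun t : ℝ => |b| / (b ^ 2 + t ^ 2)) a]
  have h2 : (fun t : ℝ => |b| / (b ^ 2 + t ^ 2))
      = fun t : ℝ => |b|⁻¹ * (fun s : ℝ => (1 + s ^ 2)⁻¹) (b⁻¹ * t) := by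
    funext t
    have hb2 : (0:ℝ) < b ^ 2 := by positivity
    simp only
    rw [div_eq_mul_inv]
    rw [mul_pow, inv_pow]
    have : 1 + (b ^ 2)⁻¹ * t ^ 2 = (b ^ 2)⁻¹ * (b ^ 2 + t ^ 2) := by
      field_simp
    rw [this, mul_inv, inv_inv]
    have habs : |b| * |b| = b ^ 2 := by rw [← abs_mul, abs_mul_self, sq]
    field_simp
    nlinarith [abs_nonneg b, _root_.sq_abs b]
  rw [h2, integral_const_mul]
  rw [MeasureTheory.Measure.integral_comp_inv_mul_left (fun s : ℝ => (1 + s ^ 2)⁻¹) b]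
  rw [integral_univ_inv_one_add_sq, smul_eq_mul]
  rw [← mul_assoc, inv_mul_cancel₀ (by positivity : |b| ≠ 0), one_mul]

lemma bound_aux {a b x M eta : ℝ} (heta : 0 < eta) (haM : |a| ≤ M)
    (h : eta ^ 2 ≤ b ^ 2 + (a - x) ^ 2) :
    1 + x ^ 2 ≤ (2 + (1 + 2 * M ^ 2) / eta ^ 2) * (b ^ 2 + (a - x) ^ 2) := by
  have h2 : a ^ 2 ≤ M ^ 2 := by nlinarith [abs_nonneg a, _root_.sq_abs a]
  have hL : (2 + (1 + 2 * M ^ 2) / eta ^ 2) = (2 * eta ^ 2 + (1 + 2 * M ^ 2)) / eta ^ 2 := by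
    field_simp
  rw [hL, div_mul_eq_mul_div, le_div_iff₀ (by positivity)]
  nlinarith [sq_nonneg (x - 2 * a), sq_nonneg b,
    mul_le_mul_of_nonneg_left h (by positivity : (0:ℝ) ≤ 1 + 2 * M ^ 2),
    mul_nonneg (sq_nonneg eta) (sq_nonneg (x - 2 * a)), mul_nonneg (sq_nonneg eta) (sq_nonneg b),
    mul_nonneg (sq_nonneg eta) (sq_nonneg (a - x))]

lemma kernel_abs_le {a b x M eta : ℝ} (heta : 0 < eta) (haM : |a| ≤ M)
    (h : eta ^ 2 ≤ b ^ 2 + (a - x) ^ 2) (w : ℝ) :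
    _root_.abs (|b| * w / (b ^ 2 + (a - x) ^ 2)) ≤
      |b| * ((2 + (1 + 2 * M ^ 2) / eta ^ 2) * (|w| / (1 + x ^ 2))) := by
  have hden : (0:ℝ) < b ^ 2 + (a - x) ^ 2 := lt_of_lt_of_le (by positivity) h
  have hL : (0:ℝ) < 2 + (1 + 2 * M ^ 2) / eta ^ 2 := by positivity
  have hb := bound_aux heta haM h
  rw [abs_div, abs_mul, _root_.abs_abs, abs_of_pos hden, div_le_iff₀ hden]
  have h1 : |b| * ((2 + (1 + 2 * M ^ 2) / eta ^ 2) * (|w| / (1 + x ^ 2))) * (b ^ 2 + (a - x) ^ 2)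
      = |b| * |w| * ((2 + (1 + 2 * M ^ 2) / eta ^ 2) * (b ^ 2 + (a - x) ^ 2)) / (1 + x ^ 2) := by
    ring
  rw [h1, le_div_iff₀ (by positivity : (0:ℝ) < 1 + x ^ 2)]
  nlinarith [mul_le_mul_of_nonneg_left hb (by positivity : (0:ℝ) ≤ |b| * |w|)]

lemma vmeas (v : ℝ → ℝ) (hint : Integrable (fun x : ℝ => v x / (1 + x ^ 2))) :
    AEStronglyMeasurable v (volume : Measure ℝ) := by
  have h1 : v = fun x => (v x / (1 + x ^ 2)) * (1 + x ^ 2) := by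
    funext x
    rw [div_mul_cancel₀]
    positivity
  rw [h1]
  exact hint.aestronglyMeasurable.mul
    ((continuous_const.add (continuous_pow 2)).aestronglyMeasurable)

lemma vabs_int (v : ℝ → ℝ) (hint : Integrable (fun x : ℝ => v x / (1 + x ^ 2))) :
    Integrable (fun x : ℝ => |v x| / (1 + x ^ 2)) := by
  refine hint.abs.congr (Eventually.of_forall fun x => ?_)
  simp only
  rw [abs_div, abs_of_pos (by positivity : (0:ℝ) < 1 + x ^ 2)]

lemma kernel_meas (v : ℝ → ℝ) (hint : Integrable (fun x : ℝ => v x / (1 + x ^ 2))) (a b : ℝ) :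
    AEStronglyMeasurable (fun x : ℝ => |b| * v x / (b ^ 2 + (a - x) ^ 2)) volume := by
  have hden : Measurable (fun x : ℝ => (b ^ 2 + (a - x) ^ 2)⁻¹) :=
    ((measurable_const.sub measurable_id).pow_const 2).const_add (b ^ 2) |>.inv
  have := ((aestronglyMeasurable_const : AEStronglyMeasurable (fun _ : ℝ => |b|) volume).mul
    (vmeas v hint)).mul hden.aestronglyMeasurable
  refine this.congr (Eventually.of_forall fun x => ?_)
  simp only [div_eq_mul_inv, Pi.mul_apply]

lemma kernel_int (v : ℝ → ℝ) (hint : Integrable (fun x : ℝ => v x / (1 + x ^ 2)))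
    (a b : ℝ) (hb : b ≠ 0) :
    Integrable (fun x : ℝ => |b| * v x / (b ^ 2 + (a - x) ^ 2)) := by
  have hbeta : (0:ℝ) < |b| := abs_pos.mpr hb
  refine Integrable.mono
    ((vabs_int v hint).const_mul (|b| * (2 + (1 + 2 * |a| ^ 2) / |b| ^ 2)))
    (kernel_meas v hint a b) (Eventually.of_forall fun x => ?_)
  have h : |b| ^ 2 ≤ b ^ 2 + (a - x) ^ 2 := by
    rw [_root_.sq_abs]; nlinarith [sq_nonneg (a - x)]
  have hk := kernel_abs_le hbeta (le_refl |a|) h (v x)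
  simp only [Real.norm_eq_abs]
  calc _root_.abs (|b| * v x / (b ^ 2 + (a - x) ^ 2))
      ≤ |b| * ((2 + (1 + 2 * |a| ^ 2) / |b| ^ 2) * (|v x| / (1 + x ^ 2))) := hk
    _ ≤ _root_.abs (|b| * (2 + (1 + 2 * |a| ^ 2) / |b| ^ 2) * (|v x| / (1 + x ^ 2))) := by
        rw [_root_.abs_of_nonneg (mul_nonneg (mul_nonneg (abs_nonneg b) (by positivity))
          (by positivity)), mul_assoc]

lemma const_div_int (c : ℝ) : Integrable (fun x : ℝ => c / (1 + x ^ 2)) := by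
  refine (integrable_inv_one_add_sq.const_mul c).congr (Eventually.of_forall fun x => ?_)
  show c * (1 + x ^ 2)⁻¹ = c / (1 + x ^ 2)
  rw [div_eq_mul_inv]

lemma kernel_const_int (a b c : ℝ) (hb : b ≠ 0) :
    Integrable (fun x : ℝ => |b| * c / (b ^ 2 + (a - x) ^ 2)) :=
  kernel_int (fun _ => c) (const_div_int c) a b hb

lemma kernel_const_integral (a b c : ℝ) (hb : b ≠ 0) :
    ∫ x : ℝ, |b| * c / (b ^ 2 + (a - x) ^ 2) = Real.pi * c := by
  have h1 : (fun x : ℝ => |b| * c / (b ^ 2 + (a - x) ^ 2))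
      = fun x : ℝ => c * (|b| / (b ^ 2 + (a - x) ^ 2)) := by
    funext x; ring
  rw [h1, integral_const_mul, poisson_kernel_integral a b hb, mul_comm]

lemma boundary_est (v : ℝ → ℝ) (hv : UpperSemicontinuous v)
    (hint : Integrable (fun x : ℝ => v x / (1 + x ^ 2)))
    (x₀ y : ℝ) (hy : v x₀ < y) :
    ∃ δ > 0, ∀ z : ℂ, z.im ≠ 0 → ‖z - (x₀ : ℂ)‖ < δ →
      poissonIntegral v z < y := by
  have hπ : (0:ℝ) < Real.pi := Real.pi_pos
  set y' := (v x₀ + y) / 2 with hy'def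
  have hy1 : v x₀ < y' := by rw [hy'def]; linarith
  have hy2 : y' < y := by rw [hy'def]; linarith
  obtain ⟨δ₁, hδ₁pos, hδ₁⟩ := Metric.eventually_nhds_iff.mp (hv x₀ y' hy1)
  set eta := δ₁ / 2 with heta_def
  have hetapos : 0 < eta := by positivity
  set M := |x₀| + δ₁ with hMdef
  set L := 2 + (1 + 2 * M ^ 2) / eta ^ 2 with hLdef
  have hLpos : 0 < L := by positivity
  set g := fun x : ℝ => (|v x| + |y'|) / (1 + x ^ 2) with hgdef
  have hgint : Integrable g := by
    refine ((vabs_int v hint).add (const_div_int |y'|)).congr (Eventually.of_forall fun x => ?_)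
    rw [hgdef]; simp only [Pi.add_apply]; rw [add_div]
  have hgnonneg : ∀ x, 0 ≤ g x := fun x => by rw [hgdef]; positivity
  set C := ∫ x, g x with hCdef
  have hCnonneg : (0:ℝ) ≤ C := integral_nonneg hgnonneg
  set Q := Real.pi⁻¹ * L * C with hQdef
  have hQnonneg : 0 ≤ Q := by positivity
  set δ := min eta ((y - y') / (Q + 1)) with hδdef
  have hδpos : 0 < δ := by
    exact lt_min hetapos (div_pos (by linarith) (by linarith))
  refine ⟨δ, hδpos, fun z hzim hzd => ?_⟩
  set a := z.re with hadef
  set b := z.im with hbdef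
  have hre : (z - (x₀ : ℂ)).re = a - x₀ := by simp [hadef]
  have him : (z - (x₀ : ℂ)).im = b := by simp [hbdef]
  have habs1 : |a - x₀| < δ := by
    rw [← hre]; exact lt_of_le_of_lt (Complex.abs_re_le_norm _) hzd
  have habs2 : |b| < δ := by
    rw [← him]; exact lt_of_le_of_lt (Complex.abs_im_le_norm _) hzd
  have haeta : |a - x₀| < eta := lt_of_lt_of_le habs1 (min_le_left _ _)
  have haM : |a| ≤ M := by
    have h1 : |a| ≤ |x₀| + |a - x₀| := by
      calc |a| = |x₀ + (a - x₀)| := by ring_nf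
        _ ≤ |x₀| + |a - x₀| := abs_add_le _ _
    rw [hMdef]
    have : eta ≤ δ₁ := by rw [heta_def]; linarith
    linarith
  -- integrability
  have hIv := kernel_int v hint a b hzim
  have hIc := kernel_const_int a b y' hzim
  set D := fun x : ℝ => |b| * (v x - y') / (b ^ 2 + (a - x) ^ 2) with hDdef
  have hDint : Integrable D := by
    refine (hIv.sub hIc).congr (Eventually.of_forall fun x => ?_)
    rw [hDdef]; simp only [Pi.sub_apply]; ring
  -- decomposition
  have hsplit : ∫ x, |b| * v x / (b ^ 2 + (a - x) ^ 2) = (∫ x, D x) + Real.pi * y' := by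
    have h1 : (fun x : ℝ => |b| * v x / (b ^ 2 + (a - x) ^ 2))
        = fun x => D x + |b| * y' / (b ^ 2 + (a - x) ^ 2) := by
      funext x; rw [hDdef]; ring
    rw [h1, integral_add hDint hIc, kernel_const_integral a b y' hzim]
  -- near/far split
  set s := Metric.ball x₀ δ₁ with hsdef
  have hDs : ∫ x in s, D x ≤ 0 := by
    refine setIntegral_nonpos measurableSet_ball fun x hx => ?_
    have hvx : v x < y' := hδ₁ (mem_ball.mp hx)
    rw [hDdef]
    exact div_nonpos_of_nonpos_of_nonneg
      (mul_nonpos_of_nonneg_of_nonpos (abs_nonneg b) (by linarith)) (by positivity)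
  have hDfar : ∫ x in sᶜ, D x ≤ |b| * L * C := by
    have hbound : ∀ x ∈ sᶜ, D x ≤ |b| * L * g x := by
      intro x hx
      have hxfar : δ₁ ≤ |x - x₀| := by
        simp only [hsdef, Set.mem_compl_iff, mem_ball, not_lt, Real.dist_eq] at hx
        exact hx
      have hfar2 : eta ^ 2 ≤ b ^ 2 + (a - x) ^ 2 := by
        have h1 : eta ≤ |a - x| := by
          have h2 : |x - x₀| ≤ |x - a| + |a - x₀| := by
            calc |x - x₀| = |(x - a) + (a - x₀)| := by ring_nf
              _ ≤ |x - a| + |a - x₀| := abs_add_le _ _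
          have h3 : |x - a| = |a - x| := abs_sub_comm _ _
          rw [heta_def] at haeta ⊢; linarith
        nlinarith [sq_nonneg b, abs_nonneg (a - x), _root_.sq_abs (a - x)]
      calc D x ≤ |D x| := le_abs_self _
        _ ≤ |b| * (L * ((|v x - y'|) / (1 + x ^ 2))) := by
            rw [hDdef]; exact kernel_abs_le hetapos haM hfar2 _
        _ ≤ |b| * L * g x := by
            rw [hgdef, mul_assoc]
            simp only
            gcongr
            exact abs_sub (v x) y'
    calc ∫ x in sᶜ, D x
        ≤ ∫ x in sᶜ, |b| * L * g x :=
          setIntegral_mono_on hDint.integrableOn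
            ((hgint.const_mul (|b| * L)).integrableOn) measurableSet_ball.compl hbound
      _ ≤ ∫ x, |b| * L * g x :=
          setIntegral_le_integral (hgint.const_mul (|b| * L))
            (Eventually.of_forall fun x =>
              mul_nonneg (mul_nonneg (abs_nonneg b) hLpos.le) (hgnonneg x))
      _ = |b| * L * C := by rw [hCdef, integral_const_mul]
  have hI : ∫ x, D x ≤ |b| * L * C := by
    rw [← integral_add_compl (measurableSet_ball : MeasurableSet s) hDint]
    linarith
  have hPz : poissonIntegral v z = Real.pi⁻¹ * (∫ x, D x) + y' := by
    rw [poissonIntegral, ← hadef, ← hbdef, hsplit, mul_add, ← mul_assoc,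
      inv_mul_cancel₀ hπ.ne', one_mul]
  have h0 : Real.pi⁻¹ * (∫ x, D x) ≤ Real.pi⁻¹ * (|b| * L * C) :=
    mul_le_mul_of_nonneg_left hI (by positivity)
  have h0' : Real.pi⁻¹ * (|b| * L * C) = |b| * Q := by rw [hQdef]; ring
  have h1 : |b| * Q ≤ ((y - y') / (Q + 1)) * Q :=
    mul_le_mul_of_nonneg_right (habs2.le.trans (min_le_right _ _)) hQnonneg
  have h2 : ((y - y') / (Q + 1)) * Q < y - y' := by
    rw [div_mul_eq_mul_div, div_lt_iff₀ (by linarith : (0:ℝ) < Q + 1)]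
    exact mul_lt_mul_of_pos_left (by linarith) (by linarith)
  linarith

lemma poisson_continuousAt (v : ℝ → ℝ) (hint : Integrable (fun x : ℝ => v x / (1 + x ^ 2)))
    (z₀ : ℂ) (h : z₀.im ≠ 0) : ContinuousAt (poissonIntegral v) z₀ := by
  have him : (0:ℝ) < |z₀.im| := abs_pos.mpr h
  set δ₀ := |z₀.im| / 2 with hδ₀def
  have hδ₀ : 0 < δ₀ := by positivity
  set M := ‖z₀‖ + δ₀ with hMdef
  set L := 2 + (1 + 2 * M ^ 2) / δ₀ ^ 2 with hLdef
  have hLpos : 0 < L := by positivity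
  have hball : Metric.ball z₀ δ₀ ∈ nhds z₀ := Metric.ball_mem_nhds _ hδ₀
  have key : ∀ z ∈ Metric.ball z₀ δ₀, δ₀ ≤ |z.im| ∧ |z.re| ≤ M ∧ |z.im| ≤ M := by
    intro z hz
    rw [mem_ball, Complex.dist_eq] at hz
    have h1 : |z.im - z₀.im| ≤ ‖z - z₀‖ := by
      have := Complex.abs_im_le_norm (z - z₀)
      rwa [Complex.sub_im] at this
    have h2 : |z.re - z₀.re| ≤ ‖z - z₀‖ := by
      have := Complex.abs_re_le_norm (z - z₀)
      rwa [Complex.sub_re] at this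
    have h3 : |z₀.re| ≤ ‖z₀‖ := Complex.abs_re_le_norm _
    have h4 : |z₀.im| ≤ ‖z₀‖ := Complex.abs_im_le_norm _
    refine ⟨?_, ?_, ?_⟩
    · have := abs_sub_abs_le_abs_sub z₀.im z.im
      rw [abs_sub_comm z₀.im z.im] at this
      rw [hδ₀def]
      linarith [abs_nonneg (z.im - z₀.im)]
    · have := abs_sub_abs_le_abs_sub z.re z₀.re
      rw [hMdef]; linarith
    · have := abs_sub_abs_le_abs_sub z.im z₀.im
      rw [hMdef, hδ₀def]; linarith
  have hcont : ContinuousAt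
      (fun z : ℂ => ∫ x : ℝ, |z.im| * v x / (z.im ^ 2 + (z.re - x) ^ 2)) z₀ := by
    apply continuousAt_of_dominated (bound := fun x => M * (L * (|v x| / (1 + x ^ 2))))
    · filter_upwards [hball] with z _
      exact kernel_meas v hint z.re z.im
    · filter_upwards [hball] with z hz
      refine Eventually.of_forall fun x => ?_
      obtain ⟨h1, h2, h3⟩ := key z hz
      have hfar : δ₀ ^ 2 ≤ z.im ^ 2 + (z.re - x) ^ 2 := by
        nlinarith [sq_nonneg (z.re - x), _root_.sq_abs z.im, abs_nonneg z.im]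
      have hk := kernel_abs_le hδ₀ h2 hfar (v x)
      rw [Real.norm_eq_abs]
      calc _root_.abs (|z.im| * v x / (z.im ^ 2 + (z.re - x) ^ 2))
          ≤ |z.im| * (L * (|v x| / (1 + x ^ 2))) := hk
        _ ≤ M * (L * (|v x| / (1 + x ^ 2))) :=
            mul_le_mul_of_nonneg_right h3 (by positivity)
    · exact (((vabs_int v hint).const_mul L).const_mul M)
    · refine Eventually.of_forall fun x => ?_
      have hden0 : z₀.im ^ 2 + (z₀.re - x) ^ 2 ≠ 0 := by
        have : (0:ℝ) < z₀.im ^ 2 := by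
          rw [← _root_.sq_abs]; positivity
        nlinarith [sq_nonneg (z₀.re - x)]
      have hnum : ContinuousAt (fun z : ℂ => |z.im| * v x) z₀ :=
        ((continuous_abs.comp Complex.continuous_im).continuousAt).mul continuousAt_const
      have hden : ContinuousAt (fun z : ℂ => z.im ^ 2 + (z.re - x) ^ 2) z₀ := by
        exact ((Complex.continuous_im.pow 2).add
          ((Complex.continuous_re.sub continuous_const).pow 2)).continuousAt
      exact hnum.div hden hden0
  exact continuousAt_const.mul hcont

lemma poisson_neg (v : ℝ → ℝ) (z : ℂ) :
    poissonIntegral (fun x => -v x) z = - poissonIntegral v z := by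
  rw [poissonIntegral, poissonIntegral, ← mul_neg, ← integral_neg]
  apply congrArg
  apply integral_congr_ae
  refine Eventually.of_forall fun x => ?_
  ring

theorem statement10 (v : ℝ → ℝ) (hv : UpperSemicontinuous v)
    (hint : Integrable (fun x : ℝ => v x / (1 + x ^ 2)))
    (P : ℂ → ℝ)
    (hP : ∀ z : ℂ, P z = if z.im = 0 then v z.re else poissonIntegral v z) :
    UpperSemicontinuous P ∧ (Continuous v → Continuous P) := by
  have hoff : ∀ z₀ : ℂ, z₀.im ≠ 0 → ContinuousAt P z₀ := by
    intro z₀ h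
    have hopen : {z : ℂ | z.im ≠ 0} ∈ nhds z₀ := by
      refine IsOpen.mem_nhds ?_ h
      exact isOpen_compl_singleton.preimage Complex.continuous_im
    have heq : P =ᶠ[nhds z₀] poissonIntegral v := by
      filter_upwards [hopen] with z hz
      rw [hP z, if_neg hz]
    exact (poisson_continuousAt v hint z₀ h).congr heq.symm
  have hdistre : ∀ z z₀ : ℂ, dist z.re z₀.re ≤ dist z z₀ := by
    intro z z₀
    rw [Real.dist_eq, Complex.dist_eq]
    have := Complex.abs_re_le_norm (z - z₀)
    rwa [Complex.sub_re] at this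
  constructor
  · intro z₀
    by_cases h : z₀.im = 0
    · intro y hy
      rw [hP z₀, if_pos h] at hy
      obtain ⟨δ₁, hδ₁pos, hδ₁⟩ := Metric.eventually_nhds_iff.mp (hv z₀.re y hy)
      obtain ⟨δ₂, hδ₂pos, hδ₂⟩ := boundary_est v hv hint z₀.re y hy
      rw [Metric.eventually_nhds_iff]
      refine ⟨min δ₁ δ₂, lt_min hδ₁pos hδ₂pos, fun z hz => ?_⟩
      show P z < y
      rw [hP z]
      by_cases hzim : z.im = 0
      · rw [if_pos hzim]
        apply hδ₁
        exact lt_of_le_of_lt (hdistre z z₀) (lt_of_lt_of_le hz (min_le_left _ _))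
      · rw [if_neg hzim]
        apply hδ₂ z hzim
        have hz₀ : ((z₀.re : ℝ) : ℂ) = z₀ := Complex.ext (by simp) (by simp [h])
        rw [hz₀, ← Complex.dist_eq]
        exact lt_of_lt_of_le hz (min_le_right _ _)
    · exact (hoff z₀ h).upperSemicontinuousAt
  · intro hcv
    rw [continuous_iff_continuousAt]
    intro z₀
    by_cases h : z₀.im = 0
    swap
    · exact hoff z₀ h
    rw [Metric.continuousAt_iff]
    intro ε hε
    have hε2 : 0 < ε / 2 := by linarith
    obtain ⟨δ₁, hδ₁pos, hδ₁⟩ := Metric.continuousAt_iff.mp (hcv.continuousAt) (ε / 2) hε2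
    obtain ⟨δ₂, hδ₂pos, hδ₂⟩ :=
      boundary_est v hv hint z₀.re (v z₀.re + ε / 2) (by linarith)
    have hvneg : UpperSemicontinuous (fun x => -v x) :=
      (hcv.neg).upperSemicontinuous
    have hintneg : Integrable (fun x : ℝ => (-v x) / (1 + x ^ 2)) := by
      refine hint.neg.congr (Eventually.of_forall fun x => ?_)
      simp only [Pi.neg_apply]
      rw [neg_div]
    obtain ⟨δ₃, hδ₃pos, hδ₃⟩ :=
      boundary_est (fun x => -v x) hvneg hintneg z₀.re (-v z₀.re + ε / 2) (by linarith)
    refine ⟨min δ₁ (min δ₂ δ₃), lt_min hδ₁pos (lt_min hδ₂pos hδ₃pos), fun z hz => ?_⟩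
    have hPz₀ : P z₀ = v z₀.re := by rw [hP z₀, if_pos h]
    have hz₀ : ((z₀.re : ℝ) : ℂ) = z₀ := Complex.ext (by simp) (by simp [h])
    rw [hPz₀, hP z]
    by_cases hzim : z.im = 0
    · rw [if_pos hzim]
      refine lt_trans (hδ₁ ?_) (by linarith)
      exact lt_of_le_of_lt (hdistre z z₀) (lt_of_lt_of_le hz (min_le_left _ _))
    · rw [if_neg hzim]
      have hzd : ‖z - ((z₀.re : ℝ) : ℂ)‖ < min δ₂ δ₃ := by
        rw [hz₀, ← Complex.dist_eq]
        exact lt_of_lt_of_le hz (min_le_right _ _)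
      have hup := hδ₂ z hzim (lt_of_lt_of_le hzd (min_le_left _ _))
      have hdown := hδ₃ z hzim (lt_of_lt_of_le hzd (min_le_right _ _))
      rw [poisson_neg] at hdown
      rw [Real.dist_eq, abs_sub_lt_iff]
      constructor <;> linarith

end
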